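/- For every finite rooted tree T_in there exist a Bayesian network N and an elimination order σ on the variables of N such that the internal subgraph of the elimination graph of (N, σ) is isomorphic to T_in as a rooted tree. -/

import Mathlib

open scoped Classical

section ElimDefs

variable {X : Type*}

/-- The scope of the leaf node `F_x`: `{x} ∪ parents(x)` in the network `E`. -/
noncomputable def leafScope [Fintype X] [DecidableEq X] (E : X → X → Prop) (x : X) : Finset X :=
  insert x (Finset.univ.filter (fun y => E y x))

/-- `i` is the first position (w.r.t. the elimination order `σ`) of a variable
belonging to `S`; a current node with scope `S` is consumed exactly at this step. -/
def minAt {n : ℕ} (σ : Fin n ≃ X) (S : Finset X) (i : Fin n) : Prop :=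
  σ i ∈ S ∧ ∀ j : Fin n, σ j ∈ S → i ≤ j

/-- `IS` records the scopes of the internal nodes of the elimination graph of
`(E, σ)`: `IS i` is the scope of the node `u_{σ i}` created at step `i`, namely
the union of the scopes of the current nodes containing `σ i` (the leaves `F_x`
first consumed at step `i`, and the internal nodes `u_{σ j}`, `j < i`, first
consumed at step `i`), with `σ i` removed. -/
def elimRec [Fintype X] [DecidableEq X] (E : X → X → Prop) {n : ℕ} (σ : Fin n ≃ X)
    (IS : Fin n → Finset X) : Prop :=
  ∀ i : Fin n, IS i =
    ((Finset.univ.filter (fun x : X => minAt σ (leafScope E x) i)).biUnion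
        (leafScope E) ∪
     (Finset.univ.filter (fun j : Fin n => j < i ∧ minAt σ (IS j) i)).biUnion
        IS).erase (σ i)

/-- The directed edges of the elimination graph: each node consumed at step `i`
points to the internal node `u_{σ i}` created at step `i`.  `Sum.inl x` is the
leaf `F_x` and `Sum.inr i` is the internal node `u_{σ i}`. -/
def elimEdge [Fintype X] [DecidableEq X] (E : X → X → Prop) {n : ℕ} (σ : Fin n ≃ X)
    (IS : Fin n → Finset X) : X ⊕ Fin n → X ⊕ Fin n → Prop :=
  fun a b =>
    match a, b with
    | Sum.inl x, Sum.inr i => minAt σ (leafScope E x) i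
    | Sum.inr j, Sum.inr i => j < i ∧ minAt σ (IS j) i
    | _, _ => False

/-- The underlying undirected graph of the elimination graph of `(E, σ)`. -/
def elimGraph [Fintype X] [DecidableEq X] (E : X → X → Prop) {n : ℕ} (σ : Fin n ≃ X)
    (IS : Fin n → Finset X) : SimpleGraph (X ⊕ Fin n) where
  Adj a b := a ≠ b ∧ (elimEdge E σ IS a b ∨ elimEdge E σ IS b a)
  symm := ⟨fun _a _b h => ⟨h.1.symm, h.2.symm⟩⟩
  loopless := ⟨fun _a h => h.1 rfl⟩

/-- The underlying undirected graph of the Bayesian network `E`. -/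
def bnGraph (E : X → X → Prop) : SimpleGraph X where
  Adj a b := a ≠ b ∧ (E a b ∨ E b a)
  symm := ⟨fun _a _b h => ⟨h.1.symm, h.2.symm⟩⟩
  loopless := ⟨fun _a h => h.1 rfl⟩

end ElimDefs

/-- for every finite rooted tree `T_in` (given by a parent map
`p` on a nonempty finite node set `W` with root `w0`), there exist a Bayesian
network `E` and an elimination order `σ` on its variables such that the
internal subgraph of the elimination graph of `(E, σ)` — the induced subgraph
on the internal nodes `u_{σ i}`, rooted at the node created last — is
isomorphic to `T_in` as a rooted tree. -/
theorem internal_subgraph_realizes_any_rooted_tree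
    {W : Type*} [Fintype W] [DecidableEq W] [Nonempty W]
    (p : W → W) (w0 : W) (hw0 : p w0 = w0)
    (hreach : ∀ w, ∃ m : ℕ, p^[m] w = w0) :
    ∃ (E : W → W → Prop) (σ : Fin (Fintype.card W) ≃ W)
      (IS : Fin (Fintype.card W) → Finset W),
      (∀ x, ¬ Relation.TransGen E x x) ∧
      elimRec E σ IS ∧
      ∃ φ : Fin (Fintype.card W) ≃ W,
        φ ⟨Fintype.card W - 1, Nat.sub_lt Fintype.card_pos Nat.one_pos⟩ = w0 ∧
        ∀ j i : Fin (Fintype.card W),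
          elimEdge E σ IS (Sum.inr j) (Sum.inr i) ↔
            (φ j ≠ w0 ∧ p (φ j) = φ i) := by
    classical
  set n := Fintype.card W with hn
  have hnpos : 0 < n := Fintype.card_pos
  -- depth function
  let d : W → ℕ := fun w => Nat.find (hreach w)
  have hd_spec : ∀ w, p^[d w] w = w0 := fun w => Nat.find_spec (hreach w)
  have hd_min : ∀ w m, m < d w → p^[m] w ≠ w0 := fun w m hm => Nat.find_min (hreach w) hm
  have hd_w0 : d w0 = 0 := by
    have h0 : p^[0] w0 = w0 := by simp
    exact Nat.le_zero.mp (Nat.find_le (h := hreach w0) h0)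
  have hd_pos : ∀ w, w ≠ w0 → 0 < d w := by
    intro w hw
    rcases Nat.eq_zero_or_pos (d w) with h | h
    · exact absurd (by simpa [h] using hd_spec w) hw
    · exact h
  have hd_parent : ∀ w, w ≠ w0 → d (p w) < d w := by
    intro w hw
    have h1 : 1 ≤ d w := hd_pos w hw
    have h2 : p^[d w - 1] (p w) = w0 := by
      have h3 : p^[(d w - 1) + 1] w = w0 := by
        rw [Nat.sub_add_cancel h1]; exact hd_spec w
      rw [Function.iterate_add_apply] at h3
      simpa using h3
    have h5 : d (p w) ≤ d w - 1 := Nat.find_le (h := hreach (p w)) h2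
    omega
  -- depth bound
  have hd_lt : ∀ w, d w < n := by
    intro w
    have hkey0 : ∀ a b : Fin (d w + 1), (a : ℕ) < (b : ℕ) →
        p^[(a : ℕ)] w = p^[(b : ℕ)] w → False := by
      intro a b hlt hab
      have ha : (a : ℕ) < d w + 1 := a.isLt
      have hb' : (b : ℕ) < d w + 1 := b.isLt
      have hb : (b : ℕ) ≤ d w := by omega
      have hshift : p^[(d w - (b : ℕ)) + (b : ℕ)] w = p^[(d w - (b : ℕ)) + (a : ℕ)] w := by
        rw [Function.iterate_add_apply, Function.iterate_add_apply, hab]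
      have h1 : p^[(d w - (b : ℕ)) + (b : ℕ)] w = w0 := by
        rw [Nat.sub_add_cancel hb]; exact hd_spec w
      have h2 : (d w - (b : ℕ)) + (a : ℕ) < d w := by omega
      exact hd_min w _ h2 (hshift ▸ h1)
    have hinj : Function.Injective (fun i : Fin (d w + 1) => p^[(i : ℕ)] w) := by
      intro a b hab
      simp only at hab
      rcases lt_trichotomy (a : ℕ) (b : ℕ) with h | h | h
      · exact absurd hab (fun hc => hkey0 a b h hc)
      · exact Fin.ext h
      · exact absurd hab.symm (fun hc => hkey0 b a h hc)
    have := Fintype.card_le_of_injective _ hinj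
    simp only [Fintype.card_fin] at this
    omega
  -- the key
  let e : W ≃ Fin n := Fintype.equivFin W
  let key : W → ℕ := fun w => (n - d w) * n + (e w : ℕ)
  have hkey_inj : Function.Injective key := by
    intro a b hab
    have ha : (e a : ℕ) < n := (e a).isLt
    have hb : (e b : ℕ) < n := (e b).isLt
    have hmod : ((n - d a) * n + (e a : ℕ)) % n = ((n - d b) * n + (e b : ℕ)) % n := by
      simp only [key] at hab
      rw [hab]
    rw [Nat.mul_comm (n - d a) n, Nat.mul_comm (n - d b) n, Nat.mul_add_mod,
      Nat.mul_add_mod] at hmod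
    rw [Nat.mod_eq_of_lt ha, Nat.mod_eq_of_lt hb] at hmod
    exact e.injective (Fin.ext hmod)
  have hkey_parent : ∀ w, w ≠ w0 → key w < key (p w) := by
    intro w hw
    have h1 : d (p w) < d w := hd_parent w hw
    have h2 : d w < n := hd_lt w
    have h3 : (e w : ℕ) < n := (e w).isLt
    have h4 : n - d w + 1 ≤ n - d (p w) := by omega
    calc (n - d w) * n + (e w : ℕ) < (n - d w) * n + n := by omega
      _ = (n - d w + 1) * n := by ring
      _ ≤ (n - d (p w)) * n := Nat.mul_le_mul_right n h4
      _ ≤ (n - d (p w)) * n + (e (p w) : ℕ) := Nat.le_add_right _ _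
  have hkey_w0 : ∀ w, w ≠ w0 → key w < key w0 := by
    intro w hw
    have h1 : 1 ≤ d w := hd_pos w hw
    have h2 : (e w : ℕ) < n := (e w).isLt
    have h5 : d w < n := hd_lt w
    have hlt : key w < n * n := by
      calc (n - d w) * n + (e w : ℕ) < (n - d w) * n + n := by omega
        _ = (n - d w + 1) * n := by ring
        _ ≤ n * n := Nat.mul_le_mul_right n (by omega)
    have hge : n * n ≤ key w0 := by
      have h6 : (n - d w0) * n = n * n := by rw [hd_w0, Nat.sub_zero]
      simp only [key, h6]
      omega
    omega
  -- the elimination order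
  let e0 : Fin n ≃ W := e.symm
  let f : Fin n → ℕ := fun i => key (e0 i)
  let π : Equiv.Perm (Fin n) := Tuple.sort f
  let σ : Fin n ≃ W := π.trans e0
  have hmono : Monotone (fun i => key (σ i)) := Tuple.monotone_sort f
  have hsmono : StrictMono (fun i => key (σ i)) :=
    hmono.strictMono_of_injective (hkey_inj.comp σ.injective)
  have hsymm_lt : ∀ u v : W, key u < key v → σ.symm u < σ.symm v := by
    intro u v h
    have := hsmono.lt_iff_lt (a := σ.symm u) (b := σ.symm v)
    simp only [Equiv.apply_symm_apply] at this
    exact this.mp h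
  -- last element is w0
  have hlast : σ ⟨n - 1, Nat.sub_lt hnpos Nat.one_pos⟩ = w0 := by
    set last : Fin n := ⟨n - 1, Nat.sub_lt hnpos Nat.one_pos⟩ with hlastdef
    by_contra hne
    have h1 := hsymm_lt _ _ (hkey_w0 (σ last) hne)
    rw [σ.symm_apply_apply] at h1
    have h2 : (σ.symm w0 : ℕ) < n := (σ.symm w0).isLt
    have h3 : (last : ℕ) < (σ.symm w0 : ℕ) := h1
    simp only [hlastdef] at h3
    omega
  have hp_ne : ∀ w, w ≠ w0 → p w ≠ w := by
    intro w hw h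
    have := hkey_parent w hw
    rw [h] at this
    exact lt_irrefl _ this
  -- the network
  set E : W → W → Prop := fun y x => x ≠ w0 ∧ p x = y with hE
  set IS : Fin n → Finset W := fun i => if σ i = w0 then ∅ else {p (σ i)} with hIS
  have hkeyE : ∀ a b : W, E a b → key b < key a := by
    rintro a b ⟨hb, rfl⟩
    exact hkey_parent b hb
  -- scope computation
  have hscope : ∀ x : W, leafScope E x = if x = w0 then {x} else {x, p x} := by
    intro x
    by_cases hx : x = w0
    · subst hx
      simp only [leafScope, if_pos rfl]
      ext y
      simp [hE]
    · simp only [leafScope, if_neg hx]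
      congr 1
      ext y
      simp only [Finset.mem_filter, Finset.mem_univ, true_and, Finset.mem_singleton, hE]
      constructor
      · rintro ⟨-, h⟩; exact h.symm
      · rintro rfl; exact ⟨hx, rfl⟩
  have hminL : ∀ (x : W) (i : Fin n), minAt σ (leafScope E x) i ↔ σ i = x := by
    intro x i
    rw [hscope]
    by_cases hx : x = w0
    · rw [if_pos hx]
      constructor
      · rintro ⟨h1, -⟩
        exact Finset.mem_singleton.mp h1
      · intro heq
        refine ⟨by rw [heq]; exact Finset.mem_singleton_self _, fun j hj => ?_⟩
        have : j = i := by
          have := Finset.mem_singleton.mp hj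
          rw [← heq] at this
          exact σ.injective this
        exact le_of_eq this.symm
    · rw [if_neg hx]
      have hxp : σ.symm x < σ.symm (p x) := hsymm_lt _ _ (hkey_parent x hx)
      constructor
      · rintro ⟨h1, h2⟩
        rcases Finset.mem_insert.mp h1 with h | h
        · exact h
        · exfalso
          have h3 := h2 (σ.symm x) (by simp)
          have h4 : i = σ.symm (p x) := by
            rw [← Finset.mem_singleton.mp h, σ.symm_apply_apply]
          rw [h4] at h3
          exact absurd (lt_of_le_of_lt h3 hxp) (lt_irrefl _)
      · intro heq
        have hi0 : σ.symm x = i := by rw [← heq, σ.symm_apply_apply]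
        refine ⟨by rw [heq]; exact Finset.mem_insert_self _ _, fun j hj => ?_⟩
        rcases Finset.mem_insert.mp hj with h | h
        · have : j = i := by rw [← hi0, ← h, σ.symm_apply_apply]
          exact le_of_eq this.symm
        · have hj' : σ.symm (p x) = j := by
            rw [← Finset.mem_singleton.mp h, σ.symm_apply_apply]
          rw [← hi0, ← hj']
          exact le_of_lt hxp
  have hminIS : ∀ j i : Fin n, minAt σ (IS j) i ↔ (σ j ≠ w0 ∧ σ i = p (σ j)) := by
    intro j i
    simp only [hIS]
    by_cases hj : σ j = w0
    · rw [if_pos hj]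
      constructor
      · rintro ⟨h1, -⟩; simp at h1
      · rintro ⟨h, -⟩; exact absurd hj h
    · rw [if_neg hj]
      constructor
      · rintro ⟨h1, -⟩
        exact ⟨hj, Finset.mem_singleton.mp h1⟩
      · rintro ⟨-, h⟩
        refine ⟨by simp [h], fun k hk => ?_⟩
        have : σ k = σ i := by rw [Finset.mem_singleton.mp hk, h]
        exact le_of_eq (σ.injective this).symm
  refine ⟨E, σ, IS, ?_, ?_, σ, hlast, ?_⟩
  · -- acyclicity
    intro x hx
    have hchain : ∀ y, Relation.TransGen E x y → key y < key x := by
      intro y h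
      induction h with
      | single h => exact hkeyE _ _ h
      | tail _ h ih => exact lt_trans (hkeyE _ _ h) ih
    exact lt_irrefl _ (hchain x hx)
  · -- elimRec
    intro i
    have hA : Finset.univ.filter (fun x : W => minAt σ (leafScope E x) i) = {σ i} := by
      ext x
      simp only [Finset.mem_filter, Finset.mem_univ, true_and, Finset.mem_singleton, hminL]
      exact eq_comm
    have hAbi : ({σ i} : Finset W).biUnion (leafScope E) = leafScope E (σ i) :=
      Finset.singleton_biUnion
    have hBsub : (Finset.univ.filter
        (fun j : Fin n => j < i ∧ minAt σ (IS j) i)).biUnion IS ⊆ {σ i} := by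
      intro y hy
      rcases Finset.mem_biUnion.mp hy with ⟨j, hj, hyj⟩
      rcases Finset.mem_filter.mp hj with ⟨-, -, hmin⟩
      rcases (hminIS j i).mp hmin with ⟨hjne, hpe⟩
      simp only [hIS, if_neg hjne, Finset.mem_singleton] at hyj
      simp [hyj, hpe]
    rw [hA, hAbi]
    set B := (Finset.univ.filter (fun j : Fin n => j < i ∧ minAt σ (IS j) i)).biUnion IS
      with hB
    have hBe : B.erase (σ i) = ∅ := by
      rw [Finset.eq_empty_iff_forall_notMem]
      intro y hy
      rcases Finset.mem_erase.mp hy with ⟨hne, hyB⟩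
      exact hne (Finset.mem_singleton.mp (hBsub hyB))
    rw [Finset.erase_union_distrib, hBe, Finset.union_empty]
    rw [hscope]
    by_cases hi : σ i = w0
    · rw [if_pos hi]
      simp only [hIS, if_pos hi]
      simp
    · rw [if_neg hi]
      simp only [hIS, if_neg hi]
      rw [show ({σ i, p (σ i)} : Finset W) = insert (σ i) {p (σ i)} from rfl,
        Finset.erase_insert]
      simp only [Finset.mem_singleton]
      exact fun h => hp_ne (σ i) hi h.symm
  · -- edges
    intro j i
    show (j < i ∧ minAt σ (IS j) i) ↔ (σ j ≠ w0 ∧ p (σ j) = σ i)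
    rw [hminIS]
    constructor
    · rintro ⟨-, h1, h2⟩
      exact ⟨h1, h2.symm⟩
    · rintro ⟨h1, h2⟩
      refine ⟨?_, h1, h2.symm⟩
      have hlt : σ.symm (σ j) < σ.symm (p (σ j)) := hsymm_lt _ _ (hkey_parent _ h1)
      rw [σ.symm_apply_apply, h2, σ.symm_apply_apply] at hlt
      exact hlt
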